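/- For n ≥ 1, the number of rooted labeled trees on vertex set [n+1] whose root is larger than all of its children and whose root has degree exactly s is C(n+1, s+1)·s·n^(n-s-1), for 1 ≤ s ≤ n. -/

import Mathlib

open Finset

section FF
variable {V : Type*} [Fintype V] [DecidableEq V]

def FF (N : Finset V) : Type _ :=
  {g : V → V // (∀ v ∈ N, g v = v) ∧ ∀ v, ∃ k, g^[k] v ∈ N}

instance (N : Finset V) : Finite (FF N) := by unfold FF; infer_instance

variable {N : Finset V}

/-- restriction of `g` to the complement of `N` -/
def resF (g : V → V) (v : {v : V // v ∉ N}) : {v : V // v ∉ N} :=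
  if hv : g v.val ∈ N then v else ⟨g v.val, hv⟩

lemma resF_agree {g : V → V} (hfix : ∀ v ∈ N, g v = v) :
    ∀ (k : ℕ) (w : {v : V // v ∉ N}), g^[k] w.val ∉ N →
      ((resF g)^[k] w).val = g^[k] w.val := by
  intro k
  induction k with
  | zero => intro w _; simp
  | succ k ih =>
      intro w hw
      have hk : g^[k] w.val ∉ N := by
        intro h
        exact hw (by rw [Function.iterate_succ_apply' g k w.val, hfix _ h]; exact h)
      have hval := ih w hk
      rw [Function.iterate_succ_apply' g k w.val] at hw ⊢
      rw [Function.iterate_succ_apply' (resF g) k w]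
      rw [← hval] at hw ⊢
      simp only [resF, dif_neg hw]

/-- extension of `f` on the complement of `N` to all of `V` -/
def extF (C : Finset {v : V // v ∉ N}) (h : ↥C → ↥N)
    (f : {v : V // v ∉ N} → {v : V // v ∉ N}) (v : V) : V :=
  if hv : v ∈ N then v
  else if hc : (⟨v, hv⟩ : {v : V // v ∉ N}) ∈ C then (h ⟨⟨v, hv⟩, hc⟩).val
  else (f ⟨v, hv⟩).val

lemma extF_agree {C : Finset {v : V // v ∉ N}} {h : ↥C → ↥N}
    {f : {v : V // v ∉ N} → {v : V // v ∉ N}} :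
    ∀ (k : ℕ) (w : {v : V // v ∉ N}), (∀ j < k, f^[j] w ∉ C) →
      (extF C h f)^[k] w.val = (f^[k] w).val := by
  intro k
  induction k with
  | zero => intro w _; simp
  | succ k ih =>
      intro w hw
      have hval := ih w (fun j hj => hw j (Nat.lt_succ_of_lt hj))
      rw [Function.iterate_succ_apply' (extF C h f) k w.val, hval,
        Function.iterate_succ_apply' f k w]
      set x := f^[k] w with hx
      show extF C h f x.val = (f x).val
      rw [extF, dif_neg x.prop]
      rw [dif_neg (by simpa using hw k (Nat.lt_succ_self k))]

/-- the set of "children of the roots" -/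
def chi (g : FF N) : Finset {v : V // v ∉ N} :=
  univ.filter (fun v => g.val v.val ∈ N)

noncomputable def fiberEquiv (C : Finset {v : V // v ∉ N}) :
    {g : FF N // chi g = C} ≃ (↥C → ↥N) × FF C where
  toFun g :=
    ⟨fun x => ⟨g.val.val x.val.val, by
        have hx : x.val ∈ chi g.val := by rw [g.prop]; exact x.prop
        exact (mem_filter.1 hx).2⟩,
      ⟨resF g.val.val, by
        intro v hv
        have : g.val.val v.val ∈ N := by
          rw [← g.prop] at hv
          exact (mem_filter.1 hv).2
        exact dif_pos this, by
        intro v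
        obtain ⟨⟨g, hfix, hreach⟩, hchi⟩ := g
        simp only at *
        have hex : ∃ k, g^[k] v.val ∈ N := hreach v.val
        refine ⟨Nat.find hex - 1, ?_⟩
        have hk : g^[Nat.find hex] v.val ∈ N := Nat.find_spec hex
        have hk0 : Nat.find hex ≠ 0 := by
          intro h0
          rw [h0] at hk
          exact v.prop (by simpa using hk)
        have hk' : g^[Nat.find hex - 1] v.val ∉ N :=
          Nat.find_min hex (by omega)
        rw [← hchi]
        refine mem_filter.2 ⟨mem_univ _, ?_⟩
        show g ((resF g)^[Nat.find hex - 1] v).val ∈ N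
        rw [resF_agree hfix _ v hk']
        rw [← Function.iterate_succ_apply' g _ v.val]
        rwa [Nat.succ_eq_add_one, Nat.sub_add_cancel (Nat.one_le_iff_ne_zero.2 hk0)]⟩⟩
  invFun x :=
    ⟨⟨extF C x.1 x.2.val, by
      intro v hv; exact dif_pos hv, by
      obtain ⟨h, f, hfixC, hreachC⟩ := x
      simp only at *
      intro v
      by_cases hv : v ∈ N
      · exact ⟨0, hv⟩
      · have hex : ∃ k, f^[k] ⟨v, hv⟩ ∈ C := hreachC ⟨v, hv⟩
        have hk : f^[Nat.find hex] ⟨v, hv⟩ ∈ C := Nat.find_spec hex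
        have agree : (extF C h f)^[Nat.find hex] v = (f^[Nat.find hex] ⟨v, hv⟩).val := by
          have := extF_agree (C := C) (h := h) (f := f) (Nat.find hex) ⟨v, hv⟩
            (fun j hj => Nat.find_min hex hj)
          simpa using this
        refine ⟨Nat.find hex + 1, ?_⟩
        rw [Function.iterate_succ_apply' (extF C h f) _ v, agree]
        set x := f^[Nat.find hex] ⟨v, hv⟩ with hx
        show extF C h f x.val ∈ N
        rw [extF, dif_neg x.prop, dif_pos (by simpa using hk)]
        exact (h _).prop⟩, by
      -- chi of the extension is C
      ext w
      simp only [chi, mem_filter, mem_univ, true_and]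
      rw [extF, dif_neg w.prop]
      by_cases hc : (⟨w.val, w.prop⟩ : {v : V // v ∉ N}) ∈ C
      · rw [dif_pos hc]
        simp only [Subtype.coe_eta] at hc
        exact iff_of_true (x.1 _).prop hc
      · rw [dif_neg hc]
        simp only [Subtype.coe_eta] at hc
        exact iff_of_false (x.2.val _).prop hc⟩
  left_inv := by
    rintro ⟨⟨g, hfix, hreach⟩, hchi⟩
    apply Subtype.ext
    apply Subtype.ext
    funext v
    show extF _ _ _ v = g v
    rw [extF]
    split_ifs with h1 h2
    · exact (hfix v h1).symm
    · rfl
    · show (resF g ⟨v, h1⟩).val = g v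
      have : g v ∉ N := by
        intro hgv
        exact h2 (hchi ▸ mem_filter.2 ⟨mem_univ _, hgv⟩)
      rw [resF, dif_neg this]
  right_inv := by
    rintro ⟨h, f⟩
    refine Prod.ext ?_ ?_
    · funext x
      apply Subtype.ext
      show extF C h f.val x.val.val = (h x).val
      rw [extF, dif_neg x.val.prop, dif_pos (by simpa using x.prop)]
    · apply Subtype.ext
      funext w
      show resF (extF C h f.val) w = f.val w
      rw [resF]
      by_cases hw : (⟨w.val, w.prop⟩ : {v : V // v ∉ N}) ∈ C
      · have hext : extF C h f.val w.val ∈ N := by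
          rw [extF, dif_neg w.prop, dif_pos hw]
          exact (h _).prop
        rw [dif_pos hext]
        simp only [Subtype.coe_eta] at hw
        exact (f.prop.1 w hw).symm
      · have hext : extF C h f.val w.val = (f.val w).val := by
          rw [extF, dif_neg w.prop, dif_neg hw]
        have : extF C h f.val w.val ∉ N := hext ▸ (f.val w).prop
        rw [dif_neg this]
        exact Subtype.ext hext

end FF

section Counting

lemma nat_card_sigma {ι : Type*} [Fintype ι] (β : ι → Type*) [∀ i, Finite (β i)] :
    Nat.card ((i : ι) × β i) = ∑ i, Nat.card (β i) := by
  classical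
  letI : ∀ i, Fintype (β i) := fun i => Fintype.ofFinite _
  rw [Nat.card_eq_fintype_card, Fintype.card_sigma]
  simp [Nat.card_eq_fintype_card]

variable {V : Type*} [Fintype V] [DecidableEq V]

lemma FF_card_rec (N : Finset V) :
    Nat.card (FF N)
      = ∑ C : Finset {v : V // v ∉ N}, N.card ^ C.card * Nat.card (FF C) := by
  classical
  rw [Nat.card_congr (Equiv.sigmaFiberEquiv (chi (N := N))).symm, nat_card_sigma]
  refine Finset.sum_congr rfl fun C _ => ?_
  rw [Nat.card_congr (fiberEquiv C), Nat.card_prod, Nat.card_fun]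
  simp [Nat.card_eq_fintype_card, Fintype.card_coe, mul_comm]

lemma FF_empty_card [Nonempty V] : Nat.card (FF (∅ : Finset V)) = 0 := by
  have : IsEmpty (FF (∅ : Finset V)) := ⟨fun g => by
    obtain ⟨k, hk⟩ := g.prop.2 (Classical.arbitrary V)
    simp at hk⟩
  simp

lemma FF_univ_card : Nat.card (FF (univ : Finset V)) = 1 := by
  have h1 : Nonempty (FF (univ : Finset V)) :=
    ⟨⟨fun v => v, fun v _ => rfl, fun v => ⟨0, mem_univ v⟩⟩⟩
  have h2 : Subsingleton (FF (univ : Finset V)) := ⟨by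
    rintro ⟨g, hg, _⟩ ⟨g', hg', _⟩
    apply Subtype.ext
    funext v
    show g v = g' v
    rw [hg v (mem_univ v), hg' v (mem_univ v)]⟩
  exact Nat.card_unique

lemma sum_finset_card {α : Type*} [Fintype α] [DecidableEq α] (φ : ℕ → ℚ) :
    ∑ C : Finset α, φ C.card
      = ∑ c ∈ Finset.range (Fintype.card α + 1), (Fintype.card α).choose c * φ c := by
  rw [← Finset.powerset_univ, Finset.sum_powerset_apply_card, Finset.card_univ]
  simp only [nsmul_eq_mul]

lemma alg_identity (m s : ℕ) (hm : 1 ≤ m) (hs : 1 ≤ s) :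
    ∑ c ∈ Finset.range (m + 1),
        (m.choose c : ℚ) * ((s : ℚ) ^ c * c * (m : ℚ) ^ ((m : ℤ) - c - 1))
      = s * ((s : ℚ) + m) ^ (m - 1) := by
  have hm0 : (m : ℚ) ≠ 0 := by positivity
  rw [Finset.sum_range_succ']
  simp only [Nat.cast_zero, mul_zero, zero_mul, add_zero]
  push_cast
  have key : ∀ i ∈ Finset.range m,
      (m.choose (i + 1) : ℚ) * ((s : ℚ) ^ (i + 1) * ((i : ℚ) + 1) * (m : ℚ) ^ ((m : ℤ) - (i + 1) - 1))
        = (s : ℚ) * ((m - 1).choose i * ((s : ℚ) ^ i * (m : ℚ) ^ (m - 1 - i))) := by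
    intro i hi
    have hi' : i ≤ m - 1 := by
      have := Finset.mem_range.1 hi; omega
    have hchoose : (m : ℚ) * ((m - 1).choose i) = (m.choose (i + 1) : ℚ) * (i + 1) := by
      have := Nat.add_one_mul_choose_eq (m - 1) i
      rw [Nat.sub_add_cancel hm] at this
      exact_mod_cast congrArg (Nat.cast : ℕ → ℚ) this
    have hexp : (m : ℤ) - (i + 1) - 1 = ((m - 1 - i : ℕ) : ℤ) - 1 := by
      push_cast [Nat.cast_sub hi', Nat.cast_sub hm]
      ring
    have hzpow : (m : ℚ) ^ ((m : ℤ) - (i + 1) - 1)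
        = (m : ℚ) ^ (m - 1 - i) * (m : ℚ)⁻¹ := by
      rw [hexp, zpow_sub_one₀ hm0, zpow_natCast]
    rw [hzpow]
    field_simp
    linear_combination (-(s:ℚ) ^ (i+1)) * hchoose
  rw [Finset.sum_congr rfl key, ← Finset.mul_sum, add_pow]
  rw [Nat.sub_add_cancel hm]
  exact congrArg _ (Finset.sum_congr rfl fun i _ => by ring)

end Counting

lemma FF_card_eq : ∀ (n : ℕ) (V : Type*) [Fintype V] [DecidableEq V],
    Fintype.card V = n → ∀ N : Finset V, N.Nonempty →
    (Nat.card (FF N) : ℚ) = N.card * (n : ℚ) ^ ((n : ℤ) - N.card - 1) := by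
  intro n
  induction n using Nat.strong_induction_on with
  | _ n ih =>
    intro V _ _ hV N hN
    have hs : 1 ≤ N.card := hN.card_pos
    have hsn : N.card ≤ n := by
      rw [← hV, ← Finset.card_univ]
      exact Finset.card_le_univ N
    have hn1 : 1 ≤ n := le_trans hs hsn
    have hn0 : (n : ℚ) ≠ 0 := by positivity
    have hV' : Fintype.card {v : V // v ∉ N} = n - N.card := by
      rw [Fintype.card_subtype_compl, hV, Fintype.card_coe]
    by_cases hm : N.card = n
    · -- N = univ
      have hNuniv : N = univ := by
        apply Finset.eq_univ_of_card
        rw [hV]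
        exact hm
      subst hNuniv
      rw [FF_univ_card]
      rw [Finset.card_univ, hV] at hm ⊢
      rw [hm]
      have : (n : ℤ) - n - 1 = -1 := by ring
      rw [this, zpow_neg_one]
      field_simp
      norm_num
    · -- N ⊊ univ
      set m := n - N.card with hmdef
      have hm1 : 1 ≤ m := by omega
      have hmn : m < n := by omega
      haveI : Nonempty {v : V // v ∉ N} := by
        rw [← Fintype.card_pos_iff, hV']
        omega
      rw [FF_card_rec N]
      push_cast
      have term_eq : ∀ C : Finset {v : V // v ∉ N},
          (N.card : ℚ) ^ C.card * (Nat.card (FF C) : ℚ)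
            = (N.card : ℚ) ^ C.card * C.card * (m : ℚ) ^ ((m : ℤ) - C.card - 1) := by
        intro C
        rcases C.eq_empty_or_nonempty with rfl | hC
        · rw [FF_empty_card]
          simp
        · rw [ih m hmn _ hV' C hC]
          ring
      rw [Finset.sum_congr rfl (fun C _ => term_eq C)]
      have group := sum_finset_card (α := {v : V // v ∉ N})
        (fun c => (N.card : ℚ) ^ c * c * (m : ℚ) ^ ((m : ℤ) - c - 1))
      rw [hV'] at group
      rw [group]
      have halg := alg_identity m N.card hm1 hs
      rw [Finset.sum_congr rfl (fun c _ => by ring :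
        ∀ c ∈ Finset.range (m + 1),
          (m.choose c : ℚ) * ((N.card : ℚ) ^ c * c * (m : ℚ) ^ ((m : ℤ) - c - 1))
            = (m.choose c : ℚ) * ((N.card : ℚ) ^ c * (c : ℚ) * (m : ℚ) ^ ((m : ℤ) - c - 1)))] at halg ⊢
      rw [halg]
      have hsum : ((N.card : ℚ) + m) = n := by
        have : N.card + m = n := by omega
        exact_mod_cast congrArg (Nat.cast : ℕ → ℚ) this
      rw [hsum]
      have hexp : (n : ℤ) - N.card - 1 = ((m - 1 : ℕ) : ℤ) := by
        push_cast [Nat.cast_sub hm1, Nat.cast_sub (le_of_lt hmn)]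
        omega
      rw [hexp, zpow_natCast]

open SimpleGraph

section Graph
variable {V : Type*} [Fintype V] [DecidableEq V] {r : V}

/-- The graph associated with a parent function. -/
def toGraph (g : V → V) : SimpleGraph V where
  Adj x y := x ≠ y ∧ (g x = y ∨ g y = x)
  symm := by constructor; rintro x y ⟨h1, h2⟩; exact ⟨h1.symm, h2.symm⟩
  loopless := by constructor; rintro x ⟨h1, _⟩; exact h1 rfl

lemma toGraph_adj {g : V → V} {x y : V} :
    (toGraph g).Adj x y ↔ x ≠ y ∧ (g x = y ∨ g y = x) := Iff.rfl

variable {g : V → V} (hfix : g r = r) (hreach : ∀ v, ∃ k, g^[k] v = r)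

include hfix in
lemma iterate_root (k : ℕ) : g^[k] r = r := by
  induction k with
  | zero => rfl
  | succ k ih => rw [Function.iterate_succ_apply', ih, hfix]

include hfix hreach in
lemma eq_root_of_periodic {v : V} {k : ℕ} (hk : k ≠ 0) (h : g^[k] v = v) : v = r := by
  obtain ⟨j, hj⟩ := hreach v
  have hmul : ∀ t : ℕ, g^[t * k] v = v := by
    intro t
    induction t with
    | zero => rw [Nat.zero_mul]; rfl
    | succ t ih => rw [Nat.succ_mul, Nat.add_comm, Function.iterate_add_apply, ih]; exact h
  have hjk : j ≤ j * k := Nat.le_mul_of_pos_right j (Nat.pos_of_ne_zero hk)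
  calc v = g^[j * k] v := (hmul j).symm
    _ = g^[j * k - j] (g^[j] v) := by
        rw [← Function.iterate_add_apply, Nat.sub_add_cancel hjk]
    _ = r := by rw [hj]; exact iterate_root hfix _

include hfix hreach in
lemma ne_self_of_ne_root {v : V} (hv : v ≠ r) : g v ≠ v := by
  intro h
  exact hv (eq_root_of_periodic hfix hreach (k := 1) one_ne_zero h)

include hfix hreach in
lemma adj_parent {v : V} (hv : v ≠ r) : (toGraph g).Adj v (g v) :=
  ⟨(ne_self_of_ne_root hfix hreach hv).symm, Or.inl rfl⟩

include hfix hreach in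
lemma reachable_root (v : V) : (toGraph g).Reachable v r := by
  obtain ⟨k, hk⟩ := hreach v
  induction k generalizing v with
  | zero => rw [show v = r from hk]
  | succ k ih =>
      by_cases hv : v = r
      · rw [hv]
      · exact ((adj_parent hfix hreach hv).reachable).trans
          (ih (g v) (by rw [← Function.iterate_succ_apply]; exact hk))

include hfix hreach in
lemma toGraph_connected : (toGraph g).Connected := by
  rw [connected_iff]
  refine ⟨fun u v => (reachable_root hfix hreach u).trans
    (reachable_root hfix hreach v).symm, ⟨r⟩⟩

include hfix hreach in
lemma toGraph_bridge {x : V} (hx : x ≠ g x) :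
    (toGraph g).IsBridge s(x, g x) := by
  have hxr : x ≠ r := by
    intro h
    exact hx (by rw [h, hfix])
  rw [isBridge_iff]
  intro hcon
  set G' := toGraph g \ SimpleGraph.fromEdgeSet {s(x, g x)} with hG'
  have hD : ∀ a b : V, G'.Adj a b → (∃ k, g^[k] a = x) → ∃ k, g^[k] b = x := by
    rintro a b ⟨⟨hab, hor⟩, hne⟩ ⟨k, hk⟩
    rw [fromEdgeSet_adj] at hne
    push_neg at hne
    have hsym : s(a, b) ≠ s(x, g x) := by
      intro h
      exact hab (hne (by simp [h]))
    rcases hor with h1 | h1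
    · -- g a = b
      rcases k with _ | k'
      · -- a = x, so the edge is the deleted one
        exfalso
        apply hsym
        simp only [Function.iterate_zero_apply] at hk
        rw [hk, ← h1, hk]
      · exact ⟨k', by rw [← h1, ← Function.iterate_succ_apply]; exact hk⟩
    · -- g b = a
      exact ⟨k + 1, by rw [Function.iterate_succ_apply, h1]; exact hk⟩
  have hwalk : ∀ (a b : V) (p : G'.Walk a b), (∃ k, g^[k] a = x) → ∃ k, g^[k] b = x := by
    intro a b p
    induction p with
    | nil => exact id
    | cons h p ih => exact fun ha => ih (hD _ _ h ha)
  obtain ⟨p⟩ := hcon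
  obtain ⟨k, hk⟩ := hwalk x (g x) p ⟨0, rfl⟩
  have : g^[k + 1] x = x := by
    rw [Function.iterate_succ_apply]
    exact hk
  exact hxr (eq_root_of_periodic hfix hreach (Nat.succ_ne_zero k) this)

include hfix hreach in
lemma toGraph_isTree : (toGraph g).IsTree := by
  refine ⟨toGraph_connected hfix hreach, ?_⟩
  rw [isAcyclic_iff_forall_adj_isBridge]
  rintro v w ⟨hne, hor⟩
  rcases hor with h | h
  · subst h
    exact toGraph_bridge hfix hreach hne
  · subst h
    rw [Sym2.eq_swap]
    exact toGraph_bridge hfix hreach hne.symm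

noncomputable def orbitWalk (hfix : g r = r) (hreach : ∀ v, ∃ k, g^[k] v = r) :
    (k : ℕ) → (v : V) → g^[k] v = r → (toGraph g).Walk v r
  | 0, _, h => SimpleGraph.Walk.nil.copy (show _ = r by simpa using h).symm rfl
  | (k+1), v, h =>
      if hv : v = r then SimpleGraph.Walk.nil.copy hv.symm rfl
      else SimpleGraph.Walk.cons (adj_parent hfix hreach hv)
        (orbitWalk hfix hreach k (g v)
          (by rw [← Function.iterate_succ_apply]; exact h))

include hfix hreach in
lemma orbitWalk_support : ∀ (k : ℕ) (v : V) (h : g^[k] v = r),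
    ∀ u ∈ (orbitWalk hfix hreach k v h).support, ∃ i, g^[i] v = u := by
  intro k
  induction k with
  | zero =>
      intro v h u hu
      simp only [orbitWalk, SimpleGraph.Walk.support_copy,
        SimpleGraph.Walk.support_nil, List.mem_singleton] at hu
      exact ⟨0, by simpa using (hu ▸ h.symm : u = _).symm⟩
  | succ k ih =>
      intro v h u hu
      rw [orbitWalk] at hu
      by_cases hv : v = r
      · rw [dif_pos hv] at hu
        simp only [SimpleGraph.Walk.support_copy, SimpleGraph.Walk.support_nil,
          List.mem_singleton] at hu
        exact ⟨0, by simp [hu, hv]⟩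
      · rw [dif_neg hv] at hu
        rw [SimpleGraph.Walk.support_cons] at hu
        rcases List.mem_cons.1 hu with rfl | hu
        · exact ⟨0, rfl⟩
        · obtain ⟨i, hi⟩ := ih (g v) _ u hu
          exact ⟨i + 1, by rw [Function.iterate_succ_apply]; exact hi⟩

include hfix hreach in
lemma orbitWalk_isPath : ∀ (k : ℕ) (v : V) (h : g^[k] v = r),
    (orbitWalk hfix hreach k v h).IsPath := by
  intro k
  induction k with
  | zero =>
      intro v h
      rw [orbitWalk, SimpleGraph.Walk.isPath_copy]
      exact SimpleGraph.Walk.IsPath.nil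
  | succ k ih =>
      intro v h
      rw [orbitWalk]
      by_cases hv : v = r
      · rw [dif_pos hv, SimpleGraph.Walk.isPath_copy]
        exact SimpleGraph.Walk.IsPath.nil
      · rw [dif_neg hv]
        refine (ih (g v) _).cons ?_
        intro hu
        obtain ⟨i, hi⟩ := orbitWalk_support hfix hreach k (g v) _ v hu
        have : g^[i + 1] v = v := by rw [Function.iterate_succ_apply]; exact hi
        exact hv (eq_root_of_periodic hfix hreach (Nat.succ_ne_zero i) this)

include hfix hreach in
lemma orbitWalk_getVert_one (k : ℕ) (v : V) (h : g^[k] v = r) (hv : v ≠ r) :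
    (orbitWalk hfix hreach k v h).getVert 1 = g v := by
  cases k with
  | zero => exact absurd (by simpa using h) hv
  | succ k =>
      rw [orbitWalk, dif_neg hv]
      exact SimpleGraph.Walk.snd_cons _ _

variable (r) in
/-- the parent function of a tree rooted at `r` -/
noncomputable def par (T : SimpleGraph V) (hT : T.IsTree) (v : V) : V :=
  if v = r then r else (hT.existsUnique_path v r).choose.getVert 1

lemma par_uniq {T : SimpleGraph V} (hT : T.IsTree) {v : V} (q : T.Walk v r)
    (hq : q.IsPath) : q = (hT.existsUnique_path v r).choose :=
  (hT.existsUnique_path v r).choose_spec.2 q hq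

lemma par_root {T : SimpleGraph V} (hT : T.IsTree) : par r T hT r = r := if_pos rfl

lemma par_of_ne {T : SimpleGraph V} (hT : T.IsTree) {v : V} (hv : v ≠ r) :
    par r T hT v = (hT.existsUnique_path v r).choose.getVert 1 := if_neg hv

lemma par_adj {T : SimpleGraph V} (hT : T.IsTree) {v : V} (hv : v ≠ r) :
    T.Adj v (par r T hT v) := by
  rw [par_of_ne hT hv]
  exact SimpleGraph.Walk.adj_snd (SimpleGraph.Walk.not_nil_of_ne hv)

lemma par_reach {T : SimpleGraph V} (hT : T.IsTree) (v : V) :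
    ∃ k, (par r T hT)^[k] v = r := by
  suffices h : ∀ (n : ℕ) (v : V), (hT.existsUnique_path v r).choose.length ≤ n →
      ∃ k, (par r T hT)^[k] v = r from h _ v le_rfl
  intro n
  induction n with
  | zero =>
      intro v hv
      exact ⟨0, SimpleGraph.Walk.eq_of_length_eq_zero (Nat.le_zero.1 hv)⟩
  | succ n ih =>
      intro v hv
      by_cases hvr : v = r
      · exact ⟨0, hvr⟩
      · set p := (hT.existsUnique_path v r).choose with hp
        have hpath : p.IsPath := (hT.existsUnique_path v r).choose_spec.1
        have hnil : ¬p.Nil := SimpleGraph.Walk.not_nil_of_ne hvr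
        have htail : p.tail = (hT.existsUnique_path (p.getVert 1) r).choose :=
          par_uniq hT p.tail hpath.tail
        have hlen : (hT.existsUnique_path (p.getVert 1) r).choose.length ≤ n := by
          rw [← htail]
          have := SimpleGraph.Walk.length_tail_add_one hnil
          omega
        obtain ⟨k, hk⟩ := ih (p.getVert 1) hlen
        refine ⟨k + 1, ?_⟩
        rw [Function.iterate_succ_apply, par_of_ne hT hvr, ← hp]
        exact hk

lemma par_eq_of_adj {T : SimpleGraph V} (hT : T.IsTree) {x y : V} (h : T.Adj x y) :
    par r T hT x = y ∨ par r T hT y = x := by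
  by_cases hx : x = r
  · subst hx
    refine Or.inr ?_
    have hy : y ≠ x := h.ne'
    have hq : (SimpleGraph.Walk.cons h.symm SimpleGraph.Walk.nil).IsPath := by
      rw [SimpleGraph.Walk.cons_isPath_iff]
      exact ⟨SimpleGraph.Walk.IsPath.nil, by simpa using hy⟩
    rw [par_of_ne hT hy, ← par_uniq hT _ hq]
    exact SimpleGraph.Walk.snd_cons _ _
  by_cases hy : y = r
  · subst hy
    refine Or.inl ?_
    have hx' : x ≠ y := h.ne
    have hq : (SimpleGraph.Walk.cons h SimpleGraph.Walk.nil).IsPath := by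
      rw [SimpleGraph.Walk.cons_isPath_iff]
      exact ⟨SimpleGraph.Walk.IsPath.nil, by simpa using hx'⟩
    rw [par_of_ne hT hx', ← par_uniq hT _ hq]
    exact SimpleGraph.Walk.snd_cons _ _
  · set q := (hT.existsUnique_path y r).choose with hqdef
    have hqpath : q.IsPath := (hT.existsUnique_path y r).choose_spec.1
    by_cases hxq : x ∈ q.support
    · refine Or.inr ?_
      have hyp : y ∉ (hT.existsUnique_path x r).choose.support := by
        intro hyp
        have hd : (q.dropUntil x hxq).IsPath := hqpath.dropUntil hxq
        have hdx : q.dropUntil x hxq = (hT.existsUnique_path x r).choose :=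
          par_uniq hT _ hd
        rw [← hdx] at hyp
        have hnodup : (q.support).Nodup := hqpath.support_nodup
        rw [← q.take_spec hxq, SimpleGraph.Walk.support_append] at hnodup
        rw [List.nodup_append] at hnodup
        have hyt : y ∈ (q.takeUntil x hxq).support :=
          SimpleGraph.Walk.start_mem_support _
        have hytail : y ∈ (q.dropUntil x hxq).support.tail := by
          have hcons := (q.dropUntil x hxq).support_eq_cons
          rw [hcons] at hyp
          rcases List.mem_cons.1 hyp with h1 | h1
          · exact absurd h1 h.ne'
          · exact h1
        exact hnodup.2.2 y hyt y hytail rfl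
      have hq' : (SimpleGraph.Walk.cons h.symm (hT.existsUnique_path x r).choose).IsPath := by
        rw [SimpleGraph.Walk.cons_isPath_iff]
        exact ⟨(hT.existsUnique_path x r).choose_spec.1, hyp⟩
      rw [par_of_ne hT hy, ← par_uniq hT _ hq']
      exact SimpleGraph.Walk.snd_cons _ _
    · refine Or.inl ?_
      have hq' : (SimpleGraph.Walk.cons h q).IsPath := by
        rw [SimpleGraph.Walk.cons_isPath_iff]
        exact ⟨hqpath, hxq⟩
      rw [par_of_ne hT hx, ← par_uniq hT _ hq']
      exact SimpleGraph.Walk.snd_cons _ _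

lemma toGraph_par {T : SimpleGraph V} (hT : T.IsTree) : toGraph (par r T hT) = T := by
  ext x y
  rw [toGraph_adj]
  constructor
  · rintro ⟨hne, hor | hor⟩
    · have hx : x ≠ r := by
        intro hx
        rw [hx, par_root] at hor
        exact hne (hx.trans hor)
      rw [← hor]
      exact par_adj hT hx
    · have hy : y ≠ r := by
        intro hy
        rw [hy, par_root] at hor
        exact hne (hor.symm ▸ hy).symm
      rw [← hor]
      exact (par_adj hT hy).symm
  · intro h
    exact ⟨h.ne, par_eq_of_adj hT h⟩

include hfix hreach in
lemma par_toGraph (hT : (toGraph g).IsTree) : par r (toGraph g) hT = g := by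
  funext v
  by_cases hv : v = r
  · rw [hv, par_root, hfix]
  · obtain ⟨k, hk⟩ := hreach v
    rw [par_of_ne hT hv,
      ← par_uniq hT (orbitWalk hfix hreach k v hk) (orbitWalk_isPath hfix hreach k v hk)]
    exact orbitWalk_getVert_one hfix hreach k v hk hv

variable (r) in
noncomputable def treeFF : {T : SimpleGraph V // T.IsTree} ≃ FF ({r} : Finset V) where
  toFun T := ⟨par r T.1 T.2,
    fun v hv => by rw [Finset.mem_singleton] at hv; rw [hv]; exact par_root T.2,
    fun v => (par_reach T.2 v).imp fun k hk => by rw [Finset.mem_singleton]; exact hk⟩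
  invFun g := ⟨toGraph g.1,
    toGraph_isTree (g.2.1 r (Finset.mem_singleton_self r))
      (fun v => (g.2.2 v).imp fun k hk => Finset.mem_singleton.1 hk)⟩
  left_inv T := Subtype.ext (toGraph_par T.2)
  right_inv g := Subtype.ext (par_toGraph
    (g.2.1 r (Finset.mem_singleton_self r))
    (fun v => (g.2.2 v).imp fun k hk => Finset.mem_singleton.1 hk)
    (toGraph_isTree (g.2.1 r (Finset.mem_singleton_self r))
      (fun v => (g.2.2 v).imp fun k hk => Finset.mem_singleton.1 hk)))

include hfix in
lemma toGraph_adj_root {v : V} : (toGraph g).Adj r v ↔ v ≠ r ∧ g v = r := by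
  rw [toGraph_adj]
  constructor
  · rintro ⟨h1, h2 | h2⟩
    · exact absurd (hfix ▸ h2 : r = v) h1
    · exact ⟨fun hv => h1 hv.symm, h2⟩
  · rintro ⟨h1, h2⟩
    exact ⟨fun hv => h1 hv.symm, Or.inr h2⟩

end Graph

section Assembly
variable {V : Type*} [Fintype V] [DecidableEq V]

/-- splitting a subtype of functions according to the value of `f` -/
def fiberSigmaEquiv {α β : Type*} (f : α → β) (p : β → Prop) :
    {a // p (f a)} ≃ Σ b : {b // p b}, {a // f a = b.val} where
  toFun a := ⟨⟨f a.1, a.2⟩, ⟨a.1, rfl⟩⟩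
  invFun x := ⟨x.2.1, by rw [x.2.2]; exact x.1.2⟩
  left_inv a := rfl
  right_inv := by
    rintro ⟨⟨b, hb⟩, ⟨a, ha⟩⟩
    dsimp at ha
    subst ha
    rfl

/-- pairs to sigma -/
def pairSigmaEquiv {W : Type*} (Q : SimpleGraph W × W → Prop) :
    {p : SimpleGraph W × W // Q p} ≃ Σ r : W, {T : SimpleGraph W // Q (T, r)} where
  toFun x := ⟨x.1.2, ⟨x.1.1, x.2⟩⟩
  invFun y := ⟨(y.2.1, y.1), y.2.2⟩
  left_inv x := rfl
  right_inv y := rfl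

lemma chi_mem_iff {r : V} (g : FF ({r} : Finset V)) (w : {v : V // v ∉ ({r} : Finset V)}) :
    w ∈ chi g ↔ g.1 w.val = r := by
  rw [chi, Finset.mem_filter]
  simp

lemma neighborSet_toGraph {r : V} (g : FF ({r} : Finset V)) :
    (toGraph g.1).neighborSet r
      = Subtype.val '' (↑(chi g) : Set {v : V // v ∉ ({r} : Finset V)}) := by
  have hfix : g.1 r = r := g.2.1 r (Finset.mem_singleton_self r)
  ext v
  rw [SimpleGraph.mem_neighborSet, toGraph_adj_root hfix]
  constructor
  · rintro ⟨h1, h2⟩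
    exact ⟨⟨v, by simpa using h1⟩, by rw [Finset.mem_coe, chi_mem_iff]; exact h2, rfl⟩
  · rintro ⟨w, hw, rfl⟩
    rw [Finset.mem_coe, chi_mem_iff] at hw
    exact ⟨by simpa using w.prop, hw⟩

lemma ncard_neighborSet_toGraph {r : V} (g : FF ({r} : Finset V)) :
    ((toGraph g.1).neighborSet r).ncard = (chi g).card := by
  rw [neighborSet_toGraph, Set.ncard_image_of_injective _ Subtype.val_injective,
    Set.ncard_coe_finset]

end Assembly

section Assembly2
variable {V : Type*} [Fintype V] [DecidableEq V] [LinearOrder V]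

/-- trees with conditions at the root -/
def Broot (r : V) (s : ℕ) : Type _ :=
  {T : SimpleGraph V // T.IsTree ∧ (∀ v, T.Adj r v → v < r) ∧ (T.neighborSet r).ncard = s}

instance (r : V) (s : ℕ) : Finite (Broot r s) := by unfold Broot; infer_instance

lemma cond_symm (r : V) (s : ℕ) (g : FF ({r} : Finset V)) :
    ((∀ v, (toGraph g.1).Adj r v → v < r) ∧ ((toGraph g.1).neighborSet r).ncard = s)
      ↔ ((∀ w ∈ chi g, (w : V) < r) ∧ (chi g).card = s) := by
  have hfix : g.1 r = r := g.2.1 r (Finset.mem_singleton_self r)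
  rw [ncard_neighborSet_toGraph]
  constructor
  · rintro ⟨h1, h2⟩
    refine ⟨fun w hw => ?_, h2⟩
    rw [chi_mem_iff] at hw
    exact h1 w.val ((toGraph_adj_root hfix).2 ⟨by simpa using w.prop, hw⟩)
  · rintro ⟨h1, h2⟩
    refine ⟨fun v hv => ?_, h2⟩
    rw [toGraph_adj_root hfix] at hv
    exact h1 ⟨v, by simpa using hv.1⟩ ((chi_mem_iff _ _).2 hv.2)

noncomputable def BrootEquiv (r : V) (s : ℕ) :
    Broot r s ≃ Σ C : {C : Finset {v : V // v ∉ ({r} : Finset V)} //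
        (∀ w ∈ C, (w : V) < r) ∧ C.card = s},
      {g : FF ({r} : Finset V) // chi g = C.val} :=
  ((Equiv.subtypeSubtypeEquivSubtypeInter _ _).symm.trans
    ((Equiv.subtypeEquiv (q := fun g => (∀ w ∈ chi g, (w : V) < r) ∧ (chi g).card = s) (treeFF r) (fun x => by
        have := cond_symm r s (treeFF r x)
        rw [← this]
        have hx : ((treeFF r).symm (treeFF r x)).1 = x.1 := by
          rw [Equiv.symm_apply_apply]
        constructor
        · intro h
          rw [show toGraph ((treeFF r) x).1 = ((treeFF r).symm (treeFF r x)).1 from rfl, hx]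
          exact h
        · intro h
          rw [show toGraph ((treeFF r) x).1 = ((treeFF r).symm (treeFF r x)).1 from rfl, hx] at h
          exact h)).trans
      (fiberSigmaEquiv chi (fun (C : Finset {v : V // v ∉ ({r} : Finset V)}) => (∀ w ∈ C, (w : V) < r) ∧ C.card = s))))

lemma card_Broot (r : V) (s : ℕ) :
    Nat.card (Broot r s)
      = ∑ C : {C : Finset {v : V // v ∉ ({r} : Finset V)} //
          (∀ w ∈ C, (w : V) < r) ∧ C.card = s}, Nat.card (FF C.val) := by
  rw [Nat.card_congr (BrootEquiv r s), nat_card_sigma]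
  refine Finset.sum_congr rfl fun C _ => ?_
  rw [Nat.card_congr (fiberEquiv C.val), Nat.card_prod, Nat.card_fun]
  have h1 : Nat.card ↥({r} : Finset V) = 1 := by
    rw [Nat.card_eq_fintype_card, Fintype.card_coe, Finset.card_singleton]
  rw [h1, one_pow, one_mul]

lemma card_condSet (r : V) (s : ℕ) :
    Nat.card {C : Finset {v : V // v ∉ ({r} : Finset V)} //
        (∀ w ∈ C, (w : V) < r) ∧ C.card = s}
      = ((Finset.univ.filter
          (fun w : {v : V // v ∉ ({r} : Finset V)} => (w : V) < r)).card).choose s := by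
  rw [Nat.card_congr (Equiv.subtypeEquivRight (q := fun C => C ∈ Finset.powersetCard s
      (Finset.univ.filter (fun w : {v : V // v ∉ ({r} : Finset V)} => (w : V) < r)))
    (fun C => by
      simp only [Finset.mem_powersetCard]
      constructor
      · rintro ⟨h1, h2⟩
        exact ⟨fun w hw => Finset.mem_filter.2 ⟨Finset.mem_univ _, h1 w hw⟩, h2⟩
      · rintro ⟨h1, h2⟩
        exact ⟨fun w hw => (Finset.mem_filter.1 (h1 hw)).2, h2⟩))]
  rw [Nat.card_eq_fintype_card, Fintype.card_coe, Finset.card_powersetCard]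

end Assembly2

lemma filter_lt_card {n : ℕ} (r : Fin (n + 1)) :
    (Finset.univ.filter
      (fun w : {v : Fin (n + 1) // v ∉ ({r} : Finset (Fin (n + 1)))} => (w : Fin (n + 1)) < r)).card
      = r.val := by
  have h1 : (Finset.univ.filter
      (fun w : {v : Fin (n + 1) // v ∉ ({r} : Finset (Fin (n + 1)))} =>
        (w : Fin (n + 1)) < r)).card
      = Fintype.card {w : {v : Fin (n + 1) // v ∉ ({r} : Finset (Fin (n + 1)))} //
          (w : Fin (n + 1)) < r} := (Fintype.card_subtype _).symm
  rw [h1]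
  have e : {w : {v : Fin (n + 1) // v ∉ ({r} : Finset (Fin (n + 1)))} //
      (w : Fin (n + 1)) < r} ≃ Set.Iio r :=
    (Equiv.subtypeSubtypeEquivSubtypeInter
        (fun v : Fin (n + 1) => v ∉ ({r} : Finset (Fin (n + 1)))) (fun v => v < r)).trans
      (Equiv.subtypeEquivRight fun v =>
        Iff.trans ⟨fun h => h.2, fun h =>
          ⟨by simp only [Finset.mem_singleton]; exact ne_of_lt h, h⟩⟩ Set.mem_Iio.symm)
  rw [Fintype.card_congr e, Fintype.card_Iio, Fin.card_Iio]

lemma card_V' {n : ℕ} (r : Fin (n + 1)) :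
    Fintype.card {v : Fin (n + 1) // v ∉ ({r} : Finset (Fin (n + 1)))} = n := by
  rw [Fintype.card_subtype_compl]
  simp

lemma hockey (n s : ℕ) :
    ∑ r : Fin (n + 1), (r.val.choose s) = (n + 1).choose (s + 1) := by
  rw [Fin.sum_univ_eq_sum_range (fun j => j.choose s)]
  rw [← Nat.sum_Icc_choose n s]
  symm
  apply Finset.sum_subset
  · intro x hx
    rw [Finset.mem_Icc] at hx
    rw [Finset.mem_range]
    omega
  · intro x hx1 hx2
    rw [Finset.mem_range] at hx1
    rw [Finset.mem_Icc] at hx2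
    exact Nat.choose_eq_zero_of_lt (by omega)

/-- The number of uprooted trees on `[n+1]` whose root has degree exactly `s` is
`C(n+1, s+1)·s·n^(n-s-1)` (interpreted in `ℚ`, so the count is `1` when `s = n`). -/
theorem stmt11 (n s : ℕ) (hn : 1 ≤ n) (hs : 1 ≤ s) (hsn : s ≤ n) :
    (Nat.card {p : SimpleGraph (Fin (n + 1)) × Fin (n + 1) //
        p.1.IsTree ∧ (∀ v : Fin (n + 1), p.1.Adj p.2 v → v < p.2) ∧
        (p.1.neighborSet p.2).ncard = s} : ℚ) =
      (Nat.choose (n + 1) (s + 1) : ℚ) * (s : ℚ) * (n : ℚ) ^ ((n : ℤ) - (s : ℤ) - 1) := by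
  have e0 := pairSigmaEquiv (fun p : SimpleGraph (Fin (n + 1)) × Fin (n + 1) =>
    p.1.IsTree ∧ (∀ v : Fin (n + 1), p.1.Adj p.2 v → v < p.2) ∧
      (p.1.neighborSet p.2).ncard = s)
  rw [Nat.card_congr e0, nat_card_sigma]
  push_cast
  have hterm : ∀ r : Fin (n + 1),
      (Nat.card {T : SimpleGraph (Fin (n + 1)) // T.IsTree ∧
          (∀ v, T.Adj r v → v < r) ∧ (T.neighborSet r).ncard = s} : ℚ)
        = (r.val.choose s : ℚ) * ((s : ℚ) * (n : ℚ) ^ ((n : ℤ) - (s : ℤ) - 1)) := by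
    intro r
    have hcb := card_Broot r s
    rw [show Nat.card {T : SimpleGraph (Fin (n + 1)) // T.IsTree ∧
          (∀ v, T.Adj r v → v < r) ∧ (T.neighborSet r).ncard = s}
        = Nat.card (Broot r s) from rfl, hcb]
    push_cast
    have hFF : ∀ C : {C : Finset {v : Fin (n + 1) // v ∉ ({r} : Finset (Fin (n + 1)))} //
        (∀ w ∈ C, (w : Fin (n + 1)) < r) ∧ C.card = s},
        (Nat.card (FF C.val) : ℚ) = (s : ℚ) * (n : ℚ) ^ ((n : ℤ) - (s : ℤ) - 1) := by
      intro C
      have := FF_card_eq n _ (card_V' r) C.val (Finset.card_pos.1 (by rw [C.prop.2]; omega))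
      rw [this, C.prop.2]
    rw [Finset.sum_congr rfl (fun C _ => hFF C), Finset.sum_const, nsmul_eq_mul]
    rw [Finset.card_univ, ← Nat.card_eq_fintype_card, card_condSet r s, filter_lt_card r]
  rw [Finset.sum_congr rfl (fun r _ => hterm r), ← Finset.sum_mul]
  rw [show ∑ r : Fin (n + 1), (r.val.choose s : ℚ) = ((n + 1).choose (s + 1) : ℚ) by
    rw [← hockey n s]; push_cast; rfl]
  ring
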